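/- For a rectangular matrix A and column index subset J, the squared Frobenius norm of A minus its projection onto the span of the selected columns, ‖A_{:,J} A_{:,J}⁺ A − A‖_F², equals Tr[K] − Tr[K_{:,J}(K_{J,J})⁻¹K_{J,:}] where K = AᵀA. -/

import Mathlib

open Matrix BigOperators

/-- The inclusion of a finite set of indices. -/
def incl {n : ℕ} (J : Finset (Fin n)) : {x // x ∈ J} → Fin n := fun j => j

/-- For a rectangular matrix `A` and a column subset `J` such that `A_{:,J}` has full
column rank (so that its Moore–Penrose pseudoinverse is `(CᵀC)⁻¹Cᵀ` for `C = A_{:,J}`),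
`‖A_{:,J} A_{:,J}⁺ A − A‖_F² = Tr[K] − Tr[K_{:,J}(K_{J,J})⁻¹K_{J,:}]` where `K = AᵀA`. -/
theorem stmt_1 (m n : ℕ) (A : Matrix (Fin m) (Fin n) ℝ) (J : Finset (Fin n))
    (hfull : IsUnit ((A.submatrix id (incl J))ᵀ * A.submatrix id (incl J)).det) :
    (let C := A.submatrix id (incl J)
     let Cpinv := (Cᵀ * C)⁻¹ * Cᵀ
     ((C * Cpinv * A - A)ᵀ * (C * Cpinv * A - A)).trace)
    = (let K := Aᵀ * A
       K.trace - (K.submatrix id (incl J) *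
          (K.submatrix (incl J) (incl J))⁻¹ * K.submatrix (incl J) id).trace) := by
  dsimp only
  set C := A.submatrix id (incl J) with hC
  set M := (Cᵀ * C)⁻¹ with hMdef
  have hMs : Mᵀ = M := by
    rw [hMdef, Matrix.transpose_nonsing_inv, Matrix.transpose_mul, Matrix.transpose_transpose]
  have h1 : M * (Cᵀ * C) = 1 := Matrix.nonsing_inv_mul _ hfull
  -- submatrix identifications
  have e1 : (Aᵀ * A).submatrix id (incl J) = Aᵀ * C := by
    rw [Matrix.submatrix_mul Aᵀ A id id (incl J) Function.bijective_id,
      Matrix.submatrix_id_id]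
  have e2 : (Aᵀ * A).submatrix (incl J) id = Cᵀ * A := by
    rw [Matrix.submatrix_mul Aᵀ A (incl J) id id Function.bijective_id,
      Matrix.submatrix_id_id, hC, Matrix.transpose_submatrix]
  have e3 : (Aᵀ * A).submatrix (incl J) (incl J) = Cᵀ * C := by
    rw [Matrix.submatrix_mul Aᵀ A (incl J) id (incl J) Function.bijective_id,
      hC, Matrix.transpose_submatrix]
  rw [e1, e2, e3]
  set P := C * M * Cᵀ with hPdef
  have hPP : P * P = P := by
    have hassoc : C * M * Cᵀ * (C * M * Cᵀ) = C * (M * (Cᵀ * C)) * (M * Cᵀ) := by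
      simp only [Matrix.mul_assoc]
    rw [hPdef, hassoc, h1, Matrix.mul_one, ← Matrix.mul_assoc]
  have hPt : Pᵀ = P := by
    rw [hPdef, Matrix.transpose_mul, Matrix.transpose_mul, hMs,
      Matrix.transpose_transpose, Matrix.mul_assoc]
  have hB : C * (M * Cᵀ) * A = P * A := by
    rw [hPdef, Matrix.mul_assoc C M Cᵀ]
  rw [hB]
  have hmain : (P * A - A)ᵀ * (P * A - A) = Aᵀ * A - Aᵀ * (P * A) := by
    have hq : (Aᵀ * P) * (P * A) = Aᵀ * (P * A) := by
      rw [Matrix.mul_assoc, ← Matrix.mul_assoc P P A, hPP]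
    rw [Matrix.transpose_sub, Matrix.transpose_mul, hPt, Matrix.sub_mul,
      Matrix.mul_sub, Matrix.mul_sub, hq, Matrix.mul_assoc]
    simp only [hPdef, Matrix.mul_assoc]
    abel
  rw [hmain, Matrix.trace_sub]
  congr 1
  rw [hPdef]
  simp only [Matrix.mul_assoc]
  rw [hMdef]
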